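/- Let a(z) be holomorphic and ā(z̄) = conj(a(z)). If (z + z̄)(a'(z) + ā'(z̄)) − 2(a(z) + ā(z̄)) = 0 identically on an open set, then a(z) = iβz² + C₃z + iγ and ā(z̄) = −iβz̄² + C₃z̄ − iγ for some real constants β, C₃, γ. -/

import Mathlib

open Complex

private lemma line_hasDerivAt {f : ℂ → ℂ} (hf : Differentiable ℂ f) (z v : ℂ) :
    HasDerivAt (fun t : ℝ => f (z + t * v)) (deriv f z * v) 0 := by
  have line : HasDerivAt (fun t : ℝ => z + (t : ℂ) * v) v 0 := by
    simpa using ((Complex.ofRealCLM.hasDerivAt (x := (0:ℝ))).mul_const v).const_add z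
  have hfz : HasFDerivAt f (ContinuousLinearMap.restrictScalars ℝ (fderiv ℂ f z))
      (z + ((0:ℝ) : ℂ) * v) := by
    simpa using (hf z).hasFDerivAt.restrictScalars ℝ
  have h1 := hfz.comp_hasDerivAt (x := (0:ℝ)) line
  have happ : (fderiv ℂ f z) v = deriv f z * v := by
    have hv : v = v • (1:ℂ) := by simp
    rw [deriv, hv, map_smul, smul_eq_mul, smul_eq_mul, mul_comm]
    simp
  simpa [Function.comp_def, happ] using h1

private lemma line_hasDerivAt_conj {f : ℂ → ℂ} (hf : Differentiable ℂ f) (z v : ℂ) :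
    HasDerivAt (fun t : ℝ => (starRingEnd ℂ) (f (z + t * v)))
      ((starRingEnd ℂ) (deriv f z * v)) 0 := by
  simpa using (line_hasDerivAt hf z v).star

private lemma line_basic (z v : ℂ) :
    HasDerivAt (fun t : ℝ => z + (t : ℂ) * v) v 0 := by
  simpa using ((Complex.ofRealCLM.hasDerivAt (x := (0:ℝ))).mul_const v).const_add z

private lemma line_basic_conj (z v : ℂ) :
    HasDerivAt (fun t : ℝ => (starRingEnd ℂ) (z + (t : ℂ) * v)) ((starRingEnd ℂ) v) 0 := by
  simpa using (line_basic z v).star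

private lemma dir_deriv_zero {F : ℂ → ℂ} {s : Set ℂ} (hs : IsOpen s)
    (hF : ∀ z ∈ s, F z = 0) {z : ℂ} (hz : z ∈ s) {v D : ℂ}
    (hd : HasDerivAt (fun t : ℝ => F (z + t * v)) D 0) : D = 0 := by
  have hc : Continuous fun t : ℝ => z + (t : ℂ) * v := by continuity
  have hmem : (fun t : ℝ => z + (t : ℂ) * v) ⁻¹' s ∈ nhds (0:ℝ) :=
    hc.continuousAt.preimage_mem_nhds (by simpa using hs.mem_nhds hz)
  have heq : (fun t : ℝ => F (z + (t : ℂ) * v)) =ᶠ[nhds (0:ℝ)] fun _ => 0 := by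
    filter_upwards [hmem] with t ht using hF _ ht
  have h0 : HasDerivAt (fun _ : ℝ => (0:ℂ)) D 0 := hd.congr_of_eventuallyEq heq.symm
  exact h0.unique (hasDerivAt_const _ _)


/- STATEMENT 13: if a is holomorphic, ā(z̄) = conj(a(z)), and
(z+z̄)(a'(z)+ā'(z̄)) − 2(a(z)+ā(z̄)) = 0 on a nonempty open set, then
a(z) = iβz² + C₃z + iγ with real constants β, C₃, γ. -/
theorem quadratic_form_of_symmetry_coefficient
    (a : ℂ → ℂ) (ha : Differentiable ℂ a)
    (s : Set ℂ) (hs : IsOpen s) (hne : s.Nonempty)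
    (h : ∀ z ∈ s,
      (z + (starRingEnd ℂ) z) * (deriv a z + (starRingEnd ℂ) (deriv a z))
        - 2 * (a z + (starRingEnd ℂ) (a z)) = 0) :
    ∃ β C₃ γ : ℝ, ∀ z : ℂ,
      a z = Complex.I * (β : ℂ) * z ^ 2 + (C₃ : ℂ) * z + Complex.I * (γ : ℂ) := by
  have hA : AnalyticOnNhd ℂ a Set.univ := fun z _ => ha.analyticAt z
  have hA1 : AnalyticOnNhd ℂ (deriv a) Set.univ := hA.deriv
  have hA2 : AnalyticOnNhd ℂ (deriv (deriv a)) Set.univ := hA1.deriv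
  have hA3 : AnalyticOnNhd ℂ (deriv (deriv (deriv a))) Set.univ := hA2.deriv
  have ha1 : Differentiable ℂ (deriv a) := fun z => (hA1 z trivial).differentiableAt
  have ha2 : Differentiable ℂ (deriv (deriv a)) := fun z => (hA2 z trivial).differentiableAt
  -- Step 1: on s, (z+z̄)(a''+conj a'') = 0
  have step1 : ∀ z ∈ s, (z + (starRingEnd ℂ) z) *
      (deriv (deriv a) z + (starRingEnd ℂ) (deriv (deriv a) z)) = 0 := by
    intro z hz
    have q1 := (line_basic z 1).add (line_basic_conj z 1)
    have q2 := (line_hasDerivAt ha1 z 1).add (line_hasDerivAt_conj ha1 z 1)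
    have q3 := (line_hasDerivAt ha z 1).add (line_hasDerivAt_conj ha z 1)
    have total := (q1.mul q2).sub (q3.const_mul (2:ℂ))
    have hD := dir_deriv_zero (F := fun w => (w + (starRingEnd ℂ) w) *
      (deriv a w + (starRingEnd ℂ) (deriv a w)) - 2 * (a w + (starRingEnd ℂ) (a w)))
      hs h hz total
    simp only [Pi.add_apply, map_one, mul_one, Complex.ofReal_zero, zero_mul, add_zero, map_mul] at hD
    linear_combination hD
  -- find z₀ ∈ s with z₀.re ≠ 0, plus an open neighborhood inside s
  obtain ⟨z₁, hz₁⟩ := hne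
  obtain ⟨ε, hε, hball⟩ := Metric.isOpen_iff.1 hs z₁ hz₁
  set U : Set ℂ := s ∩ {w : ℂ | w.re ≠ 0} with hUdef
  have hU : IsOpen U := hs.inter (isOpen_ne_fun Complex.continuous_re continuous_const)
  have hUne : ∃ z₀, z₀ ∈ U := by
    rcases ne_or_eq z₁.re 0 with h0 | h0
    · exact ⟨z₁, hz₁, h0⟩
    · have hz2 : z₁ + ((ε/2 : ℝ) : ℂ) ∈ s := by
        apply hball
        simp only [Metric.mem_ball, Complex.dist_eq, add_sub_cancel_left, Complex.norm_real, Real.norm_eq_abs]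
        rw [abs_of_pos (by linarith : (0:ℝ) < ε/2)]; linarith
      refine ⟨_, hz2, ?_⟩
      simp only [Set.mem_setOf_eq, Complex.add_re, Complex.ofReal_re, h0, zero_add]
      positivity
  obtain ⟨z₀, hz₀⟩ := hUne
  -- on U: a'' + conj a'' = 0
  have stepU : ∀ z ∈ U, deriv (deriv a) z + (starRingEnd ℂ) (deriv (deriv a) z) = 0 := by
    intro z hz
    have hnz : (z + (starRingEnd ℂ) z) ≠ 0 := by
      rw [Complex.add_conj]
      simpa using hz.2
    exact (mul_eq_zero.1 (step1 z hz.1)).resolve_left hnz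
  -- on U: a''' = 0
  have step2 : ∀ z ∈ U, deriv (deriv (deriv a)) z = 0 := by
    intro z hz
    set w := deriv (deriv (deriv a)) z with hw
    have e1 : w * 1 + (starRingEnd ℂ) (w * 1) = 0 := by
      have q := (line_hasDerivAt ha2 z 1).add (line_hasDerivAt_conj ha2 z 1)
      exact dir_deriv_zero hU stepU hz q
    have e2 : w * Complex.I + (starRingEnd ℂ) (w * Complex.I) = 0 := by
      have q := (line_hasDerivAt ha2 z Complex.I).add (line_hasDerivAt_conj ha2 z Complex.I)
      exact dir_deriv_zero hU stepU hz q
    have hc1 : (starRingEnd ℂ) w = -w := by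
      have := e1; simp at this; linear_combination this
    rw [map_mul, hc1, Complex.conj_I] at e2
    have h3 : w * Complex.I = 0 := by linear_combination e2 / 2
    rcases mul_eq_zero.1 h3 with h | h
    · exact h
    · exact absurd h Complex.I_ne_zero
  -- a''' = 0 everywhere
  have h3all : ∀ z : ℂ, deriv (deriv (deriv a)) z = 0 := by
    have hev : deriv (deriv (deriv a)) =ᶠ[nhds z₀] 0 :=
      Filter.eventuallyEq_of_mem (hU.mem_nhds hz₀) step2
    have := hA3.eqOn_zero_of_preconnected_of_eventuallyEq_zero isPreconnected_univ
      (Set.mem_univ z₀) hev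
    intro z; exact this (Set.mem_univ z)
  -- a'' is constant
  set K : ℂ := deriv (deriv a) 0 with hKdef
  have hK : ∀ z, deriv (deriv a) z = K := fun z =>
    is_const_of_deriv_eq_zero ha2 h3all z 0
  have hKc : K + (starRingEnd ℂ) K = 0 := by
    have := stepU z₀ hz₀; rwa [hK z₀] at this
  set B : ℂ := deriv a 0 with hBdef
  set C : ℂ := a 0 with hCdef
  set A : ℂ := K / 2 with hAdef
  -- deriv a z = B + K * z
  have hda : ∀ z, deriv a z = B + K * z := by
    intro z
    have hdg : ∀ x, deriv (fun w => deriv a w - (B + K * w)) x = 0 := by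
      intro x
      have hlin : HasDerivAt (fun w : ℂ => B + K * w) K x := by
        simpa using ((hasDerivAt_id x).const_mul K).const_add B
      have hd : HasDerivAt (fun w => deriv a w - (B + K * w)) (deriv (deriv a) x - K) x :=
        (ha1 x).hasDerivAt.sub hlin
      rw [hd.deriv, hK x, sub_self]
    have hgdiff : Differentiable ℂ (fun w => deriv a w - (B + K * w)) :=
      ha1.sub ((differentiable_const B).add ((differentiable_id).const_mul K))
    have := is_const_of_deriv_eq_zero hgdiff hdg z 0
    simp at this
    linear_combination this
  -- a z = C + B z + A z²
  have hfa : ∀ z, a z = C + B * z + A * z ^ 2 := by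
    intro z
    have hdg : ∀ x, deriv (fun w => a w - (C + B * w + A * w ^ 2)) x = 0 := by
      intro x
      have hpoly : HasDerivAt (fun w : ℂ => C + B * w + A * w ^ 2) (B + A * (2 * x)) x := by
        have h1 : HasDerivAt (fun w : ℂ => C + B * w) B x := by
          simpa using ((hasDerivAt_id x).const_mul B).const_add C
        have h2 : HasDerivAt (fun w : ℂ => A * w ^ 2) (A * (2 * x)) x := by
          simpa using ((hasDerivAt_pow 2 x).const_mul A)
        exact h1.add h2
      have hd : HasDerivAt (fun w => a w - (C + B * w + A * w ^ 2))
          (deriv a x - (B + A * (2 * x))) x := (ha x).hasDerivAt.sub hpoly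
      rw [hd.deriv, hda x]
      rw [hAdef]; ring
    have hgdiff : Differentiable ℂ (fun w => a w - (C + B * w + A * w ^ 2)) := by
      apply ha.sub
      apply Differentiable.add
      · exact (differentiable_const C).add ((differentiable_id).const_mul B)
      · exact (differentiable_id.pow 2).const_mul A
    have := is_const_of_deriv_eq_zero hgdiff hdg z 0
    simp at this
    linear_combination this
  -- A real part is zero
  have hAre : A.re = 0 := by
    have : K.re = 0 := by
      have := congrArg Complex.re hKc
      simp at this
      linarith
    rw [hAdef]
    simp [Complex.div_re, this]
  -- key real equation on s
  have key : ∀ w ∈ s, B.im * w.im = C.re := by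
    intro w hw
    have E := h w hw
    rw [hfa w, hda w] at E
    have hK2 : K = 2 * A := by rw [hAdef]; ring
    rw [hK2] at E
    have := congrArg Complex.re E
    simp only [map_add, map_mul, map_ofNat, map_pow, Complex.sub_re, Complex.add_re,
      Complex.mul_re, Complex.mul_im, Complex.conj_re, Complex.conj_im, Complex.add_im,
      Complex.zero_re, Complex.re_ofNat, Complex.im_ofNat, pow_two, hAre] at this
    linear_combination this / 4
  -- use two points of s to show B.im = 0, C.re = 0
  have hp : z₁ ∈ s := hz₁
  have hq : z₁ + ((ε/2 : ℝ) : ℂ) * Complex.I ∈ s := by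
    apply hball
    simp only [Metric.mem_ball, Complex.dist_eq, add_sub_cancel_left]
    rw [norm_mul, Complex.norm_I, mul_one, Complex.norm_real, Real.norm_eq_abs,
      abs_of_pos (by linarith : (0:ℝ) < ε/2)]
    linarith
  have k1 := key z₁ hp
  have k2 := key _ hq
  have hqim : (z₁ + ((ε/2 : ℝ) : ℂ) * Complex.I).im = z₁.im + ε/2 := by simp
  rw [hqim] at k2
  have hBim : B.im = 0 := by
    have : B.im * (ε/2) = 0 := by nlinarith [k1, k2]
    have hε2 : (ε/2) ≠ 0 := by positivity
    exact (mul_eq_zero.1 this).resolve_right hε2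
  have hCre : C.re = 0 := by rw [hBim] at k1; linarith [k1]
  -- conclude
  refine ⟨A.im, B.re, C.im, fun z => ?_⟩
  rw [hfa z]
  have h1 : A = Complex.I * (A.im : ℂ) := by
    apply Complex.ext <;> simp [hAre]
  have h2 : B = (B.re : ℂ) := by
    apply Complex.ext <;> simp [hBim]
  have h3 : C = Complex.I * (C.im : ℂ) := by
    apply Complex.ext <;> simp [hCre]
  conv_lhs => rw [h1, h2, h3]
  ring
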